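/- Let S be a nonempty set of facets of the unit d-cube with X(S) + Y(S) = d. Then Y(S) ≥ 1, and the union U(S) is homotopy equivalent to the unit sphere of Y(S)-dimensional Euclidean space (that is, to a sphere of dimension Y(S) − 1). -/

import Mathlib

/-- The unit `d`-cube `[0,1]^d` in `ℝ^d`. -/
def cube (d : ℕ) : Set (Fin d → ℝ) := {x | ∀ i, 0 ≤ x i ∧ x i ≤ 1}

/-- The facet of the unit `d`-cube on which coordinate `i` equals `0` (if `b = false`)
or `1` (if `b = true`). -/
def facet (d : ℕ) (i : Fin d) (b : Bool) : Set (Fin d → ℝ) :=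
  {x ∈ cube d | x i = if b then 1 else 0}

/-- The union of the facets in a set `S` of facets. -/
def facetUnion (d : ℕ) (S : Set (Fin d × Bool)) : Set (Fin d → ℝ) :=
  ⋃ p ∈ S, facet d p.1 p.2

/-- `X(S)`: the number of opposite facet pairs eXcluded from `S`. -/
noncomputable def Xcount (d : ℕ) (S : Set (Fin d × Bool)) : ℕ :=
  {i : Fin d | (i, false) ∉ S ∧ (i, true) ∉ S}.ncard

/-- `Y(S)`: the number of opposite facet pairs Yncluded in `S`. -/
noncomputable def Ycount (d : ℕ) (S : Set (Fin d × Bool)) : ℕ :=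
  {i : Fin d | (i, false) ∈ S ∧ (i, true) ∈ S}.ncard

noncomputable def Msup {n : ℕ} (u : EuclideanSpace ℝ (Fin n)) : ℝ :=
  ‖(WithLp.equiv 2 (Fin n → ℝ)) u‖

lemma continuous_Msup {n : ℕ} : Continuous (Msup (n := n)) :=
  continuous_norm.comp (PiLp.continuousLinearEquiv 2 ℝ (fun _ : Fin n => ℝ)).continuous

lemma abs_le_Msup {n : ℕ} (u : EuclideanSpace ℝ (Fin n)) (j : Fin n) : |u j| ≤ Msup u := by
  have := norm_le_pi_norm ((WithLp.equiv 2 (Fin n → ℝ)) u) j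
  simpa [Msup, Real.norm_eq_abs] using this

lemma exists_abs_eq_Msup {n : ℕ} [Nonempty (Fin n)] (u : EuclideanSpace ℝ (Fin n)) :
    ∃ j, |u j| = Msup u := by
  obtain ⟨j, -, hj⟩ := Finset.exists_mem_eq_sup' (Finset.univ_nonempty (α := Fin n))
      (fun j => ‖u j‖₊)
  refine ⟨j, ?_⟩
  have h2 : ‖(WithLp.equiv 2 (Fin n → ℝ)) u‖₊ = ‖u j‖₊ := by
    rw [Pi.nnnorm_def, ← Finset.sup'_eq_sup (Finset.univ_nonempty (α := Fin n))]
    exact hj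
  have h1 : Msup u = ‖u j‖ := by
    simpa [Msup, ← coe_nnnorm] using congrArg (fun x : NNReal => (x : ℝ)) h2
  rw [h1, Real.norm_eq_abs]

lemma Msup_pos {n : ℕ} {u : EuclideanSpace ℝ (Fin n)} (hu : u ≠ 0) :
    0 < Msup u := by
  rw [Msup, norm_pos_iff]
  intro h
  exact hu ((WithLp.equiv 2 (Fin n → ℝ)).injective (by simpa using h))

lemma Msup_smul {n : ℕ} (c : ℝ) (u : EuclideanSpace ℝ (Fin n)) :
    Msup (c • u) = |c| * Msup u := by
  simp [Msup, norm_smul]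

noncomputable def wmap {d n : ℕ} (B : Set (Fin d)) (e : Fin n ≃ B) (x : Fin d → ℝ) :
    EuclideanSpace ℝ (Fin n) :=
  (WithLp.equiv 2 (Fin n → ℝ)).symm (fun j => x (e j) - 1/2)

lemma wmap_apply {d n : ℕ} (B : Set (Fin d)) (e : Fin n ≃ B) (x : Fin d → ℝ) (j : Fin n) :
    wmap B e x j = x (e j) - 1/2 := rfl

lemma continuous_wmap {d n : ℕ} (B : Set (Fin d)) (e : Fin n ≃ B) :
    Continuous (wmap B e) :=
  (PiLp.continuousLinearEquiv 2 ℝ (fun _ : Fin n => ℝ)).symm.continuous.comp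
    (continuous_pi fun _ => (continuous_apply _).sub continuous_const)

open Classical in
noncomputable def gfun {d n : ℕ} (B : Set (Fin d)) (e : Fin n ≃ B)
    (v : EuclideanSpace ℝ (Fin n)) : Fin d → ℝ :=
  fun i => if h : i ∈ B then 1/2 + v (e.symm ⟨i, h⟩) / (2 * Msup v) else 1/2

lemma Msup_wmap {d n : ℕ} (B : Set (Fin d)) (e : Fin n ≃ B) {x : Fin d → ℝ}
    (hx : x ∈ cube d) (hex : ∃ i ∈ B, x i = 0 ∨ x i = 1) :
    Msup (wmap B e x) = 1/2 := by
  obtain ⟨i, hiB, hxi⟩ := hex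
  refine le_antisymm ?_ ?_
  · rw [Msup]
    refine (pi_norm_le_iff_of_nonneg (by norm_num)).mpr fun j => ?_
    have h1 := (hx (e j)).1
    have h2 := (hx (e j)).2
    rw [Real.norm_eq_abs]
    show |x (e j) - 1/2| ≤ 1/2
    rw [abs_le]; constructor <;> linarith
  · have h := abs_le_Msup (wmap B e x) (e.symm ⟨i, hiB⟩)
    have he : (e (e.symm ⟨i, hiB⟩) : Fin d) = i := by rw [Equiv.apply_symm_apply]
    rw [wmap_apply, he] at h
    calc (1:ℝ)/2 = |x i - 1/2| := by rcases hxi with h0 | h0 <;> rw [h0] <;> norm_num [abs_of_nonneg]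
    _ ≤ _ := h

lemma wmap_ne_zero {d n : ℕ} (B : Set (Fin d)) (e : Fin n ≃ B) {x : Fin d → ℝ}
    (hx : x ∈ cube d) (hex : ∃ i ∈ B, x i = 0 ∨ x i = 1) :
    wmap B e x ≠ 0 := by
  intro h
  have := Msup_wmap B e hx hex
  rw [h] at this
  simp [Msup] at this
lemma key_homotopy {d n : ℕ} (B : Set (Fin d)) (e : Fin n ≃ B) (hB : B.Nonempty) :
    Nonempty (ContinuousMap.HomotopyEquiv
      ↥{x : Fin d → ℝ | x ∈ cube d ∧ ∃ i ∈ B, x i = 0 ∨ x i = 1}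
      ↥(Metric.sphere (0 : EuclideanSpace ℝ (Fin n)) 1)) := by
  classical
  obtain ⟨i0, hi0⟩ := hB
  have hne : Nonempty (Fin n) := ⟨e.symm ⟨i0, hi0⟩⟩
  set U : Set (Fin d → ℝ) := {x | x ∈ cube d ∧ ∃ i ∈ B, x i = 0 ∨ x i = 1} with hUdef
  have hMw : ∀ x : U, Msup (wmap B e x.1) = 1/2 := fun x => Msup_wmap B e x.2.1 x.2.2
  have hwne : ∀ x : U, wmap B e x.1 ≠ 0 := fun x => wmap_ne_zero B e x.2.1 x.2.2
  have hnpos : ∀ x : U, 0 < ‖wmap B e x.1‖ := fun x => norm_pos_iff.mpr (hwne x)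
  have hvne : ∀ v : (Metric.sphere (0 : EuclideanSpace ℝ (Fin n)) 1),
      (v : EuclideanSpace ℝ (Fin n)) ≠ 0 := by
    intro v h
    have := mem_sphere_zero_iff_norm.mp v.2
    rw [h] at this; simp at this
  have hMvpos : ∀ v : (Metric.sphere (0 : EuclideanSpace ℝ (Fin n)) 1),
      0 < Msup (v : EuclideanSpace ℝ (Fin n)) := fun v => Msup_pos (hvne v)
  -- the forward map
  have hFmem : ∀ x : U, ‖wmap B e x.1‖⁻¹ • wmap B e x.1 ∈
      Metric.sphere (0 : EuclideanSpace ℝ (Fin n)) 1 := by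
    intro x
    rw [mem_sphere_zero_iff_norm, norm_smul, norm_inv, norm_norm]
    exact inv_mul_cancel₀ (ne_of_gt (hnpos x))
  let F : C(U, Metric.sphere (0 : EuclideanSpace ℝ (Fin n)) 1) :=
    ⟨fun x => ⟨‖wmap B e x.1‖⁻¹ • wmap B e x.1, hFmem x⟩, by
      refine Continuous.subtype_mk ?_ _
      have h1 : Continuous fun x : U => wmap B e x.1 :=
        (continuous_wmap B e).comp continuous_subtype_val
      exact (h1.norm.inv₀ fun x => ne_of_gt (hnpos x)).smul h1⟩
  -- the inverse map
  have hGmem : ∀ v : (Metric.sphere (0 : EuclideanSpace ℝ (Fin n)) 1), gfun B e v.1 ∈ U := by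
    intro v
    have hM := hMvpos v
    constructor
    · intro i
      by_cases hi : i ∈ B
      · have h2M : (0:ℝ) < 2 * Msup v.1 := by linarith
        have habs : |v.1 (e.symm ⟨i, hi⟩) / (2 * Msup v.1)| ≤ 1/2 := by
          rw [abs_div, abs_of_pos h2M, div_le_iff₀ h2M]
          have := abs_le_Msup v.1 (e.symm ⟨i, hi⟩)
          linarith
        have h2 := abs_le.mp habs
        simp only [gfun, dif_pos hi]
        constructor <;> [linarith [h2.1]; linarith [h2.2]]
      · simp only [gfun, dif_neg hi]; norm_num
    · obtain ⟨j0, hj0⟩ := exists_abs_eq_Msup v.1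
      refine ⟨e j0, (e j0).2, ?_⟩
      have hd : gfun B e v.1 (e j0) = 1/2 + v.1 j0 / (2 * Msup v.1) := by
        simp only [gfun, dif_pos (e j0).2]
        rw [show (⟨((e j0 : B) : Fin d), (e j0).2⟩ : B) = e j0 from Subtype.ext rfl,
          Equiv.symm_apply_apply]
      have h2M : (0:ℝ) < 2 * Msup v.1 := by linarith
      have habs : |v.1 j0 / (2 * Msup v.1)| = 1/2 := by
        rw [abs_div, abs_of_pos h2M, hj0, div_eq_iff (ne_of_gt h2M)]
        ring
      rcases (abs_eq (by norm_num : (0:ℝ) ≤ 1/2)).mp habs with h | h <;>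
        rw [hd, h] <;> [right; left] <;> ring
  let G : C(↥(Metric.sphere (0 : EuclideanSpace ℝ (Fin n)) 1), U) :=
    ⟨fun v => ⟨gfun B e v.1, hGmem v⟩, by
      refine Continuous.subtype_mk ?_ _
      refine continuous_pi fun i => ?_
      by_cases hi : i ∈ B
      · simp only [gfun, dif_pos hi]
        have h1 : Continuous fun v : (Metric.sphere (0 : EuclideanSpace ℝ (Fin n)) 1) =>
            v.1 (e.symm ⟨i, hi⟩) :=
          (continuous_apply _).comp
            ((PiLp.continuousLinearEquiv 2 ℝ (fun _ : Fin n => ℝ)).continuous.comp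
              continuous_subtype_val)
        have h2 : Continuous fun v : (Metric.sphere (0 : EuclideanSpace ℝ (Fin n)) 1) =>
            2 * Msup v.1 := continuous_const.mul (continuous_Msup.comp continuous_subtype_val)
        exact continuous_const.add (h1.div h2 fun v => by have := hMvpos v; positivity)
      · simp only [gfun, dif_neg hi]; exact continuous_const⟩
  -- F ∘ G = id
  have hFG : ∀ v, F (G v) = v := by
    intro v
    have hM := hMvpos v
    apply Subtype.ext
    have hkey : wmap B e (gfun B e v.1) = (2 * Msup v.1)⁻¹ • v.1 := by
      refine PiLp.ext fun j => ?_
      rw [wmap_apply]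
      simp only [gfun, dif_pos (e j).2]
      rw [show (⟨((e j : B) : Fin d), (e j).2⟩ : B) = e j from Subtype.ext rfl,
        Equiv.symm_apply_apply]
      show 1/2 + v.1 j / (2 * Msup v.1) - 1/2 = (2 * Msup v.1)⁻¹ * v.1 j
      field_simp
      ring
    show ‖wmap B e (gfun B e v.1)‖⁻¹ • wmap B e (gfun B e v.1) = v.1
    rw [hkey, norm_smul]
    have h1 : ‖(v : EuclideanSpace ℝ (Fin n))‖ = 1 := mem_sphere_zero_iff_norm.mp v.2
    rw [norm_inv, Real.norm_eq_abs, abs_of_pos (by linarith), h1, mul_one, inv_inv, smul_smul,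
      mul_inv_cancel₀ (by positivity), one_smul]
  -- G ∘ F fixes B-coordinates
  have hGF : ∀ (x : U) (i : Fin d) (hi : i ∈ B), gfun B e (F x).1 i = x.1 i := by
    intro x i hi
    have hw := hMw x
    have hp := hnpos x
    have hMF : Msup (F x).1 = ‖wmap B e x.1‖⁻¹ * (1/2) := by
      show Msup (‖wmap B e x.1‖⁻¹ • wmap B e x.1) = _
      rw [Msup_smul, abs_of_pos (inv_pos.mpr hp), hw]
    simp only [gfun, dif_pos hi]
    have hFapp : (F x).1 (e.symm ⟨i, hi⟩) = ‖wmap B e x.1‖⁻¹ * (x.1 i - 1/2) := by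
      show (‖wmap B e x.1‖⁻¹ • wmap B e x.1) (e.symm ⟨i, hi⟩) = _
      rw [PiLp.smul_apply, wmap_apply, smul_eq_mul, Equiv.apply_symm_apply]
    rw [hFapp, hMF]
    have hc : ‖wmap B e x.1‖⁻¹ ≠ 0 := by positivity
    field_simp
    ring
  -- homotopy from G ∘ F to id
  have hHmem : ∀ (t : unitInterval) (x : U),
      (fun i => if i ∈ B then x.1 i else (1 - (t:ℝ))/2 + (t:ℝ) * x.1 i) ∈ U := by
    intro t x
    obtain ⟨hc, i, hiB, hbd⟩ := x.2
    constructor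
    · intro i
      dsimp only
      by_cases hi : i ∈ B
      · rw [if_pos hi]; exact hc i
      · rw [if_neg hi]
        have h0 := (hc i).1; have h1 := (hc i).2
        have ht0 := t.2.1; have ht1 := t.2.2
        constructor <;> nlinarith
    · refine ⟨i, hiB, ?_⟩
      dsimp only
      rw [if_pos hiB]; exact hbd
  let H : ContinuousMap.Homotopy (G.comp F) (ContinuousMap.id U) :=
    { toFun := fun p => ⟨_, hHmem p.1 p.2⟩
      continuous_toFun := by
        refine Continuous.subtype_mk ?_ _
        refine continuous_pi fun i => ?_
        by_cases hi : i ∈ B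
        · simp only [if_pos hi]
          exact (continuous_apply i).comp (continuous_subtype_val.comp continuous_snd)
        · simp only [if_neg hi]
          have ht : Continuous fun p : unitInterval × U => (p.1 : ℝ) :=
            continuous_subtype_val.comp continuous_fst
          have hx : Continuous fun p : unitInterval × U => p.2.1 i :=
            (continuous_apply i).comp (continuous_subtype_val.comp continuous_snd)
          exact ((continuous_const.sub ht).div_const 2).add (ht.mul hx)
      map_zero_left := by
        intro x
        apply Subtype.ext
        funext i
        show (if i ∈ B then x.1 i else (1 - ((0:unitInterval):ℝ))/2 + ((0:unitInterval):ℝ) * x.1 i)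
          = gfun B e (F x).1 i
        by_cases hi : i ∈ B
        · rw [if_pos hi, hGF x i hi]
        · rw [if_neg hi]
          simp only [gfun, dif_neg hi]
          norm_num
      map_one_left := by
        intro x
        apply Subtype.ext
        funext i
        show (if i ∈ B then x.1 i else (1 - ((1:unitInterval):ℝ))/2 + ((1:unitInterval):ℝ) * x.1 i)
          = x.1 i
        by_cases hi : i ∈ B
        · rw [if_pos hi]
        · rw [if_neg hi]; norm_num }
  have hFGeq : F.comp G = ContinuousMap.id _ := ContinuousMap.ext hFG
  exact ⟨⟨F, G, ⟨H⟩, by rw [hFGeq]⟩⟩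
theorem facetUnion_homotopyEquiv_sphere (d : ℕ) (S : Set (Fin d × Bool)) (hS : S.Nonempty)
    (hXY : Xcount d S + Ycount d S = d) :
    1 ≤ Ycount d S ∧
    Nonempty (ContinuousMap.HomotopyEquiv ↥(facetUnion d S)
      ↥(Metric.sphere (0 : EuclideanSpace ℝ (Fin (Ycount d S))) 1)) := by
  classical
  set B : Set (Fin d) := {i : Fin d | (i, false) ∈ S ∧ (i, true) ∈ S} with hBdef
  set A : Set (Fin d) := {i : Fin d | (i, false) ∉ S ∧ (i, true) ∉ S} with hAdef
  have hdisj : Disjoint A B := by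
    rw [Set.disjoint_left]
    rintro i ⟨h1, h2⟩ ⟨h3, h4⟩
    exact h1 h3
  have hXA : Xcount d S = A.ncard := rfl
  have hYB : Ycount d S = B.ncard := rfl
  have hunion : A ∪ B = Set.univ := by
    refine Set.eq_of_subset_of_ncard_le (Set.subset_univ _) ?_ Set.finite_univ
    rw [Set.ncard_union_eq hdisj A.toFinite B.toFinite, Set.ncard_univ, Nat.card_eq_fintype_card,
      Fintype.card_fin]
    rw [hXA, hYB] at hXY
    omega
  have hAB : ∀ i, i ∈ A ∨ i ∈ B := by
    intro i
    have : i ∈ A ∪ B := hunion ▸ Set.mem_univ i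
    exact this
  have hmem : ∀ i b, ((i, b) ∈ S ↔ i ∈ B) := by
    intro i b
    constructor
    · intro h
      rcases hAB i with hA | hB
      · exfalso; cases b
        · exact hA.1 h
        · exact hA.2 h
      · exact hB
    · intro h
      cases b
      · exact h.1
      · exact h.2
  have hBne : B.Nonempty := by
    obtain ⟨⟨i, b⟩, hp⟩ := hS
    exact ⟨i, (hmem i b).1 hp⟩
  have hUeq : facetUnion d S = {x : Fin d → ℝ | x ∈ cube d ∧ ∃ i ∈ B, x i = 0 ∨ x i = 1} := by
    ext x
    simp only [facetUnion, facet, Set.mem_iUnion, Set.mem_setOf_eq, Set.mem_sep_iff,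
      exists_prop]
    constructor
    · rintro ⟨⟨i, b⟩, hp, hx, hxi⟩
      refine ⟨hx, i, (hmem i b).1 hp, ?_⟩
      cases b
      · left; simpa using hxi
      · right; simpa using hxi
    · rintro ⟨hx, i, hiB, h0 | h1⟩
      · exact ⟨(i, false), (hmem i false).2 hiB, hx, by simpa using h0⟩
      · exact ⟨(i, true), (hmem i true).2 hiB, hx, by simpa using h1⟩
  have hfin : B.Finite := B.toFinite
  have hYpos : 1 ≤ Ycount d S := by
    rw [hYB]
    exact (Set.ncard_pos hfin).mpr hBne
  refine ⟨hYpos, ?_⟩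
  have hcard : hfin.toFinset.card = Ycount d S := by
    rw [hYB, Set.ncard_eq_toFinset_card B hfin]
  let e : Fin (Ycount d S) ≃ B :=
    ((finCongr hcard.symm).trans hfin.toFinset.equivFin.symm).trans
      (Equiv.subtypeEquivRight fun x => hfin.mem_toFinset)
  obtain ⟨E⟩ := key_homotopy B e hBne
  exact ⟨(Homeomorph.setCongr hUeq).toHomotopyEquiv.trans E⟩
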